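/- Let κ_0 < κ_1 < ⋯ < κ_n be infinite regular cardinals, let X be a T3 (regular Hausdorff) space, let p ∈ X, and suppose the neighborhood filter N(p,X) is cofinally equivalent to the coordinatewise product ∏_{i≤n} κ_i. Then X has a cellular family of cardinality κ_n. -/

import Mathlib

universe u v w

/-- Two preorders are *cofinally equivalent* if there is a preorder (given here by a
reflexive transitive relation `le` on `R`) such that both are order isomorphic to
cofinal subsets of it. -/
def CofEquiv (P : Type u) (Q : Type v) [Preorder P] [Preorder Q] : Prop :=
  ∃ (R : Type (max u v)) (le : R → R → Prop),
    Reflexive le ∧ Transitive le ∧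
    ∃ (f : P → R) (g : Q → R),
      Function.Injective f ∧ Function.Injective g ∧
      (∀ a b : P, a ≤ b ↔ le (f a) (f b)) ∧
      (∀ a b : Q, a ≤ b ↔ le (g a) (g b)) ∧
      (∀ r : R, ∃ a : P, le r (f a)) ∧
      (∀ r : R, ∃ b : Q, le r (g b))

/-- The neighborhood filter of `p`, i.e. all sets whose interior contains `p`,
as a preorder under containment `⊇`. -/
def Nbhds (X : Type w) [TopologicalSpace X] (p : X) := {U : Set X // U ∈ nhds p}

instance (X : Type w) [TopologicalSpace X] (p : X) : Preorder (Nbhds X p) where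
  le U V := Subtype.val V ⊆ Subtype.val U
  le_refl _ := subset_rfl
  le_trans _ _ _ h1 h2 := Set.Subset.trans h2 h1

/-- If `κ 0 < ⋯ < κ n` are infinite regular cardinals, `X` is `T₃`,
and `N(p,X)` is cofinally equivalent to `∏_{i ≤ n} κ i`, then `X` has a cellular
family of cardinality `κ n`. -/
theorem rectangular_base_cellular {X : Type u} [TopologicalSpace X] [T3Space X] (p : X)
    (n : ℕ) (κ : Fin (n + 1) → Cardinal.{u})
    (hreg : ∀ i, (κ i).IsRegular) (hmono : StrictMono κ)
    (heq : CofEquiv (Nbhds X p) (∀ i, (κ i).ord.ToType)) :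
    ∃ C : Set (Set X), Cardinal.mk C = κ (Fin.last n) ∧
      (∀ V ∈ C, IsOpen V ∧ V.Nonempty) ∧
      (∀ V ∈ C, ∀ W ∈ C, V ≠ W → Disjoint V W) := by
  classical
  obtain ⟨R, le, -, htrans, f, g, -, -, hf, hg, hfcof, hgcof⟩ := heq
  have hregn := hreg (Fin.last n)
  have haleph : Cardinal.aleph0 ≤ κ (Fin.last n) := hregn.aleph0_le
  -- nonemptiness of each factor
  have hne0 : ∀ i : Fin (n+1), Nonempty ((κ i).ord.ToType) := by
    intro i
    rw [Ordinal.toType_nonempty_iff_ne_zero]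
    intro h0
    have h1 : (0:Ordinal) < (κ i).ord := by
      rw [Cardinal.lt_ord]
      simpa using lt_of_lt_of_le Cardinal.aleph0_pos (hreg i).aleph0_le
    rw [h0] at h1
    exact lt_irrefl _ h1
  -- the maps φ and ψ
  let φ : (∀ i, (κ i).ord.ToType) → Nbhds X p := fun s => Classical.choose (hfcof (g s))
  have hφ : ∀ s, le (g s) (f (φ s)) := fun s => Classical.choose_spec (hfcof (g s))
  let ψ : Nbhds X p → (∀ i, (κ i).ord.ToType) := fun V => Classical.choose (hgcof (f V))
  have hψ : ∀ V, le (f V) (g (ψ V)) := fun V => Classical.choose_spec (hgcof (f V))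
  have key : ∀ (V : Nbhds X p) (s : ∀ i, (κ i).ord.ToType), ψ V ≤ s →
      (φ s).1 ⊆ V.1 := by
    intro V s hs
    have h2 : le (g (ψ V)) (g s) := (hg _ _).1 hs
    exact (hf V (φ s)).2 (htrans (htrans (hψ V) h2) (hφ s))
  -- strict upper bounds for small families
  have hbound : ∀ (ι : Type u) (h : ι → (κ (Fin.last n)).ord.ToType),
      Cardinal.mk ι < κ (Fin.last n) → ∃ γ, ∀ i, h i < γ := by
    intro ι h hι
    have hlim : Order.IsSuccLimit ((κ (Fin.last n)).ord) := Cardinal.isSuccLimit_ord haleph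
    set e := Ordinal.ToType.mk (o := (κ (Fin.last n)).ord) with he
    have hlt : ∀ i, Order.succ (e.symm (h i)).1 < (κ (Fin.last n)).ord :=
      fun i => hlim.succ_lt (e.symm (h i)).2
    have hsup : (⨆ i, Order.succ (e.symm (h i)).1) < (κ (Fin.last n)).ord :=
      Cardinal.iSup_lt_ord_of_isRegular hregn hι hlt
    refine ⟨e ⟨_, hsup⟩, fun i => ?_⟩
    have h3 : e.symm (h i) < (⟨_, hsup⟩ : Set.Iio ((κ (Fin.last n)).ord)) := by
      rw [← Subtype.coe_lt_coe]
      exact lt_of_lt_of_le (Order.lt_succ _) (Ordinal.le_iSup _ i)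
    have h4 := e.lt_iff_lt.2 h3
    simpa using h4
  have smallIio : ∀ ξ : (κ (Fin.last n)).ord.ToType,
      Cardinal.mk {η : (κ (Fin.last n)).ord.ToType // η < ξ} < κ (Fin.last n) :=
    fun ξ => Cardinal.mk_Iio_ord_toType ξ

  -- base point in lower coordinates and diagonal chain
  let z : ∀ i : Fin n, (κ i.castSucc).ord.ToType := fun i => Classical.choice (hne0 i.castSucc)
  let t : (κ (Fin.last n)).ord.ToType → ∀ i, (κ i).ord.ToType := fun α => Fin.lastCases α z
  -- closed shrinkings
  have hC : ∀ α : (κ (Fin.last n)).ord.ToType,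
      ∃ s ∈ nhds p, IsClosed s ∧ s ⊆ (φ (t α)).1 :=
    fun α => exists_mem_nhds_isClosed_subset (φ (t α)).2
  choose Cs hCmem hCcl hCsub using hC
  let Cn : (κ (Fin.last n)).ord.ToType → Nbhds X p := fun α => ⟨Cs α, hCmem α⟩
  let lam : (κ (Fin.last n)).ord.ToType → (κ (Fin.last n)).ord.ToType :=
    fun α => ψ (Cn α) (Fin.last n)
  let Lower : (κ (Fin.last n)).ord.ToType → ∀ i : Fin n, (κ i.castSucc).ord.ToType :=
    fun α i => ψ (Cn α) i.castSucc
  -- the target type of Lower is small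
  have hBcard : Cardinal.mk (∀ i : Fin n, (κ i.castSucc).ord.ToType) < κ (Fin.last n) := by
    rcases Nat.eq_zero_or_pos n with hn | hn
    · haveI : IsEmpty (Fin n) := by rw [hn]; infer_instance
      have h1 : Cardinal.mk (∀ i : Fin n, (κ i.castSucc).ord.ToType) = 1 := Cardinal.mk_eq_one _
      rw [h1]
      exact lt_of_lt_of_le Cardinal.one_lt_aleph0 haleph
    · have hj : n - 1 < n + 1 := by omega
      have hstep : ∀ i : Fin n, Cardinal.mk ((κ i.castSucc).ord.ToType) ≤ κ ⟨n-1, hj⟩ := by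
        intro i
        rw [Cardinal.mk_toType, Cardinal.card_ord]
        refine hmono.monotone ?_
        have hi := i.isLt
        simp only [Fin.le_def, Fin.coe_castSucc]
        omega
      calc Cardinal.mk (∀ i : Fin n, (κ i.castSucc).ord.ToType)
          = Cardinal.prod (fun i : Fin n => Cardinal.mk ((κ i.castSucc).ord.ToType)) :=
            Cardinal.mk_pi _
        _ ≤ Cardinal.prod (fun _ : Fin n => κ ⟨n-1, hj⟩) := Cardinal.prod_le_prod _ _ hstep
        _ = κ ⟨n-1, hj⟩ ^ (n : Cardinal) := by simp
        _ = κ ⟨n-1, hj⟩ := by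
            rw [Cardinal.power_natCast]
            exact Cardinal.power_nat_eq (hreg _).aleph0_le hn
        _ < κ (Fin.last n) := by
            refine hmono ?_
            simp only [Fin.lt_def, Fin.val_last]
            omega
  -- a fiber of Lower is unbounded
  have hfiber : ∃ v, ∀ β, ∃ α, Lower α = v ∧ β < α := by
    by_contra hcon
    push_neg at hcon
    choose b hb using hcon
    obtain ⟨γ, hγ⟩ := hbound _ b hBcard
    exact absurd (hb (Lower γ) γ rfl) (not_le.2 (hγ (Lower γ)))
  obtain ⟨v, hv⟩ := hfiber
  -- the canonical open neighborhoods
  let Nb : (κ (Fin.last n)).ord.ToType → Nbhds X p :=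
    fun γ => ⟨interior (φ (Fin.lastCases γ v)).1, interior_mem_nhds.2 (φ _).2⟩
  -- the recursion step
  have hex : ∀ (ξ : (κ (Fin.last n)).ord.ToType)
      (prev : ∀ η, η < ξ → ((κ (Fin.last n)).ord.ToType × (κ (Fin.last n)).ord.ToType)),
      ∃ q : ((κ (Fin.last n)).ord.ToType × (κ (Fin.last n)).ord.ToType),
        Lower q.2 = v ∧ (∀ η h, lam (prev η h).2 < q.1) ∧
        (∀ η h, (prev η h).2 < q.2) ∧ ψ (Nb q.1) (Fin.last n) < q.2 := by
    intro ξ prev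
    obtain ⟨γ, hγ⟩ := hbound _ (fun η : {η // η < ξ} => lam (prev η.1 η.2).2) (smallIio ξ)
    obtain ⟨δ, hδ⟩ := hbound _ (fun η : {η // η < ξ} => (prev η.1 η.2).2) (smallIio ξ)
    obtain ⟨α, hα1, hα2⟩ := hv (max δ (ψ (Nb γ) (Fin.last n)))
    refine ⟨(γ, α), hα1, fun η h => hγ ⟨η, h⟩, fun η h => ?_, ?_⟩
    · exact lt_trans (hδ ⟨η, h⟩) (lt_of_le_of_lt (le_max_left _ _) hα2)
    · exact lt_of_le_of_lt (le_max_right _ _) hα2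
  have wf : WellFounded ((· < ·) : (κ (Fin.last n)).ord.ToType →
      (κ (Fin.last n)).ord.ToType → Prop) := wellFounded_lt
  let D := wf.fix (fun ξ IH => Classical.choose (hex ξ IH))
  have hD : ∀ ξ, D ξ = Classical.choose (hex ξ (fun η _ => D η)) := fun ξ => wf.fix_eq _ ξ
  have hDspec : ∀ ξ, Lower (D ξ).2 = v ∧ (∀ η (h : η < ξ), lam (D η).2 < (D ξ).1) ∧
      (∀ η (h : η < ξ), (D η).2 < (D ξ).2) ∧ ψ (Nb (D ξ).1) (Fin.last n) < (D ξ).2 := by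
    intro ξ
    have h := Classical.choose_spec (hex ξ (fun η _ => D η))
    rw [← hD ξ] at h
    exact h
  -- the cellular family
  let W : (κ (Fin.last n)).ord.ToType → Set X := fun ξ => (Nb (D ξ).1).1 \ Cs (D ξ).2
  have hWne : ∀ ξ, (W ξ).Nonempty := by
    intro ξ
    rw [Set.nonempty_iff_ne_empty]
    intro hemp
    have hsub2 : (Nb (D ξ).1).1 ⊆ Cs (D ξ).2 := Set.diff_eq_empty.1 hemp
    have hsub3 : (Nb (D ξ).1).1 ⊆ (φ (t (D ξ).2)).1 := fun x hx => hCsub _ (hsub2 hx)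
    have h1 : φ (t (D ξ).2) ≤ Nb (D ξ).1 := hsub3
    have h2 : le (g (t (D ξ).2)) (g (ψ (Nb (D ξ).1))) :=
      htrans (htrans (hφ _) ((hf _ _).1 h1)) (hψ _)
    have h3 : t (D ξ).2 ≤ ψ (Nb (D ξ).1) := (hg _ _).2 h2
    have h4 := h3 (Fin.last n)
    have h5 : t (D ξ).2 (Fin.last n) = (D ξ).2 := Fin.lastCases_last
    rw [h5] at h4
    exact absurd h4 (not_le.2 (hDspec ξ).2.2.2)
  have hWsub : ∀ ξ η, η < ξ → W ξ ⊆ Cs (D η).2 := by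
    intro ξ η hlt
    have hle2 : ψ (Cn (D η).2) ≤
        (fun i => (Fin.lastCases (D ξ).1 v i : (κ i).ord.ToType)) := by
      refine Pi.le_def.2 fun i => ?_
      show ψ (Cn (D η).2) i ≤ Fin.lastCases (D ξ).1 v i
      induction i using Fin.lastCases with
      | last =>
        rw [Fin.lastCases_last]
        exact le_of_lt ((hDspec ξ).2.1 η hlt)
      | cast j =>
        rw [Fin.lastCases_castSucc]
        exact le_of_eq (congrFun (hDspec η).1 j)
    have h6 := key (Cn (D η).2) _ hle2
    intro x hx
    exact h6 (interior_subset hx.1)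
  have hdisj : ∀ ξ η, η < ξ → Disjoint (W η) (W ξ) := by
    intro ξ η hlt
    refine Set.disjoint_left.2 fun x hxη hxξ => ?_
    exact hxη.2 (hWsub ξ η hlt hxξ)
  have hWinj : Function.Injective W := by
    intro a b hab
    by_contra hne
    rcases lt_or_gt_of_ne hne with h | h
    · obtain ⟨x, hx⟩ := hWne a
      exact Set.disjoint_left.1 (hdisj b a h) hx (hab ▸ hx)
    · obtain ⟨x, hx⟩ := hWne b
      exact Set.disjoint_left.1 (hdisj a b h) hx (hab.symm ▸ hx)
  refine ⟨Set.range W, ?_, ?_, ?_⟩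
  · rw [Cardinal.mk_range_eq W hWinj, Cardinal.mk_toType, Cardinal.card_ord]
  · rintro V ⟨ξ, rfl⟩
    exact ⟨IsOpen.sdiff isOpen_interior (hCcl _), hWne ξ⟩
  · rintro V ⟨ξ, rfl⟩ V' ⟨η, rfl⟩ hVne
    rcases lt_trichotomy ξ η with h | h | h
    · exact hdisj η ξ h
    · exact absurd (congrArg W h) hVne
    · exact (hdisj ξ η h).symm
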